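/- Let A be an (α,β)-Frobenius extension of B with trace map tr. Then a map tr' : A → B is also a trace map for this extension if and only if there exists an invertible element a ∈ A commuting with every element of α(B) such that tr'(x) = tr(xa) for all x ∈ A. -/
import Mathlib


section

variable {A : Type u} [Ring A] (B : Subring A) (α : A ≃+* A) (β : B ≃+* B)

/-- A (left) trace map for an `(α,β)`-Frobenius extension: a `(B,B)`-bimodule map
`_β A_α → B` (i.e. `tr(β(b) x α(b')) = b tr(x) b'`) such that `tr(A a) = 0` forces
`a = 0`, and every left `B`-linear map `_β A → B` is `x ↦ tr(x a)` for some `a ∈ A`. -/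
def IsLeftTraceMap (tr : A →+ B) : Prop :=
  (∀ (b b' : B) (x : A), tr ((β b : A) * x * α (b' : A)) = b * tr x * b') ∧
  (∀ a : A, (∀ x : A, tr (x * a) = 0) → a = 0) ∧
  (∀ f : A →+ B, (∀ (b : B) (x : A), f ((β b : A) * x) = b * f x) →
    ∃ a : A, ∀ x : A, f x = tr (x * a))

/-- Let `A` be an `(α,β)`-Frobenius extension of `B` with trace map `tr`.  Then a map
`tr' : A → B` is also a trace map for this extension if and only if there exists an
invertible element `a ∈ A` commuting with every element of `α(B)` such that
`tr'(x) = tr(x a)` for all `x ∈ A`. -/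
theorem isLeftTraceMap_iff_mul_unit
    (hfin : Module.Finite B A) (hproj : Module.Projective B A)
    (tr : A →+ B) (htr : IsLeftTraceMap B α β tr) (tr' : A →+ B) :
    IsLeftTraceMap B α β tr' ↔
      ∃ a : A, IsUnit a ∧ (∀ b : B, a * α (b : A) = α (b : A) * a) ∧
        ∀ x : A, tr' x = tr (x * a) := by
  obtain ⟨h1, h2, h3⟩ := htr
  constructor
  · rintro ⟨h1', h2', h3'⟩
    -- tr' is left B-linear, so tr' x = tr (x * a) for some a
    obtain ⟨a, ha⟩ := h3 tr' (fun b x => by simpa using h1' b 1 x)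
    -- tr is left B-linear, so tr x = tr' (x * c) for some c
    obtain ⟨c, hc⟩ := h3' tr (fun b x => by simpa using h1 b 1 x)
    have hca : c * a = 1 := by
      have := h2 (c * a - 1) (fun x => by
        rw [mul_sub, mul_one, map_sub, ← mul_assoc, ← ha, ← hc, sub_self])
      exact sub_eq_zero.mp this
    have hac : a * c = 1 := by
      have := h2' (a * c - 1) (fun x => by
        rw [mul_sub, mul_one, map_sub, ← mul_assoc, ← hc, ← ha, sub_self])
      exact sub_eq_zero.mp this
    refine ⟨a, isUnit_iff_exists.mpr ⟨c, hac, hca⟩, fun b => ?_, ha⟩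
    have := h2 (α (b : A) * a - a * α (b : A)) (fun x => by
      have e1 : tr (x * (α (b : A) * a)) = tr' x * b := by
        rw [← mul_assoc, ← ha]
        simpa using h1' 1 b x
      have e2 : tr (x * (a * α (b : A))) = tr' x * b := by
        rw [← mul_assoc]
        have := h1 1 b (x * a)
        simp only [OneMemClass.coe_one, map_one, one_mul] at this ⊢
        rw [this, ← ha]
      rw [mul_sub, map_sub, e1, e2, sub_self])
    exact (sub_eq_zero.mp this).symm
  · rintro ⟨a, haU, hcomm, ha⟩
    obtain ⟨c, hac, hca⟩ := isUnit_iff_exists.mp haU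
    refine ⟨fun b b' x => ?_, fun z hz => ?_, fun f hf => ?_⟩
    · have key : (β b : A) * x * α (b' : A) * a = (β b : A) * (x * a) * α (b' : A) := by
        rw [mul_assoc ((β b : A) * x), ← hcomm b', ← mul_assoc, mul_assoc ((β b : A))]
      rw [ha, key, h1, ← ha]
    · have hz' : ∀ x : A, tr (x * (z * a)) = 0 := fun x => by
        rw [← mul_assoc, ← ha]; exact hz x
      have : z * a = 0 := h2 _ hz'
      calc z = z * (a * c) := by rw [hac, mul_one]
        _ = z * a * c := by rw [mul_assoc]
        _ = 0 := by rw [this, zero_mul]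
    · obtain ⟨d, hd⟩ := h3 f hf
      refine ⟨d * c, fun x => ?_⟩
      have e : x * (d * c) * a = x * d := by
        rw [mul_assoc x, mul_assoc d, hca, mul_one]
      rw [hd, ha, e]

end
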